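/- Let n, m, Q, M be positive integers with Q ≥ n√m·M, let B be an invertible n×n integer matrix with all entries bounded in absolute value by M, let y_1, ..., y_m ∈ P(B), let a_j = ⌊Q B^{-1} y_j⌋ for each j, and let A be the n×m matrix with columns a_1, ..., a_m. Suppose r = (r_1, ..., r_m) ∈ ℤ^m satisfies Ar = 0 and max_j |r_j| ≤ β. Then for any x_1, ..., x_m ∈ ℝ^n with y_j − x_j well-defined, setting v = Σ_{j=1}^m r_j (y_j − x_j) and z_j = (1/Q) B a_j, one has Σ_{j=1}^m r_j z_j = 0 and ‖v‖ ≤ ‖Σ_{j=1}^m r_j x_j‖ + β · m n√n · M / Q ≤ ‖Σ_{j=1}^m r_j x_j‖ + β √(nm), where ‖·‖ is the Euclidean norm. -/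

import Mathlib

/-- Euclidean norm of a real vector. -/
noncomputable def euclNorm {n : ℕ} (v : Fin n → ℝ) : ℝ := Real.sqrt (∑ i, (v i) ^ 2)

noncomputable def toE {n : ℕ} (v : Fin n → ℝ) : EuclideanSpace ℝ (Fin n) :=
  (WithLp.equiv 2 (Fin n → ℝ)).symm v

lemma euclNorm_eq {n : ℕ} (v : Fin n → ℝ) : euclNorm v = ‖toE v‖ := by
  rw [EuclideanSpace.norm_eq]
  simp [euclNorm, toE, sq_abs]

lemma toE_sum {n m : ℕ} (f : Fin m → Fin n → ℝ) : toE (∑ j, f j) = ∑ j, toE (f j) := by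
  unfold toE; exact (WithLp.toLp_sum ..)

lemma toE_smul {n : ℕ} (c : ℝ) (v : Fin n → ℝ) : toE (c • v) = c • toE v := rfl

lemma toE_sub {n : ℕ} (u v : Fin n → ℝ) : toE (u - v) = toE u - toE v := rfl

lemma euclNorm_nonneg {n : ℕ} (v : Fin n → ℝ) : 0 ≤ euclNorm v := Real.sqrt_nonneg _

lemma euclNorm_le_of_forall {n : ℕ} (v : Fin n → ℝ) (c : ℝ) (hc : 0 ≤ c)
    (h : ∀ i, |v i| ≤ c) : euclNorm v ≤ Real.sqrt n * c := by
  have hsum : ∑ i, (v i) ^ 2 ≤ ∑ _i : Fin n, c ^ 2 := by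
    refine Finset.sum_le_sum fun i _ => ?_
    rw [← sq_abs]
    exact pow_le_pow_left₀ (abs_nonneg _) (h i) 2
  calc euclNorm v ≤ Real.sqrt ((n : ℝ) * c ^ 2) := by
        apply Real.sqrt_le_sqrt
        simpa using hsum
    _ = Real.sqrt n * c := by
        rw [Real.sqrt_mul (by positivity), Real.sqrt_sq hc]

theorem short_vector_norm_bound (n m Q M : ℕ)
    (hn : 0 < n) (hm : 0 < m) (hQ : 0 < Q) (hM : 0 < M)
    (hQbig : (n : ℝ) * Real.sqrt m * (M : ℝ) ≤ (Q : ℝ))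
    (B : Matrix (Fin n) (Fin n) ℤ)
    (hBdet : IsUnit (B.map (Int.cast : ℤ → ℝ)).det)
    (hB : ∀ i j, |B i j| ≤ (M : ℤ))
    (y : Fin m → Fin n → ℝ)
    (hy : ∀ j, ∃ t : Fin n → ℝ, (∀ i, t i ∈ Set.Ico (0 : ℝ) 1) ∧
      y j = (B.map (Int.cast : ℤ → ℝ)).mulVec t)
    (a : Fin m → Fin n → ℤ)
    (ha : ∀ j i, a j i = ⌊(Q : ℝ) * ((B.map (Int.cast : ℤ → ℝ))⁻¹.mulVec (y j)) i⌋)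
    (A : Matrix (Fin n) (Fin m) ℤ) (hA : ∀ i j, A i j = a j i)
    (r : Fin m → ℤ) (hr : A.mulVec r = 0)
    (β : ℝ) (hβ : ∀ j, |(r j : ℝ)| ≤ β)
    (x : Fin m → Fin n → ℝ)
    (z : Fin m → Fin n → ℝ)
    (hz : ∀ j, z j = ((Q : ℝ))⁻¹ •
      (B.map (Int.cast : ℤ → ℝ)).mulVec (fun i => (a j i : ℝ))) :
    (∑ j, (r j : ℝ) • z j) = 0 ∧
    euclNorm (∑ j, (r j : ℝ) • (y j - x j))
      ≤ euclNorm (∑ j, (r j : ℝ) • x j)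
        + β * (m : ℝ) * ((n : ℝ) * Real.sqrt n) * (M : ℝ) / (Q : ℝ) ∧
    euclNorm (∑ j, (r j : ℝ) • x j)
        + β * (m : ℝ) * ((n : ℝ) * Real.sqrt n) * (M : ℝ) / (Q : ℝ)
      ≤ euclNorm (∑ j, (r j : ℝ) • x j) + β * Real.sqrt ((n : ℝ) * (m : ℝ)) := by
  have hQR : (0 : ℝ) < Q := by exact_mod_cast hQ
  have hβ0 : 0 ≤ β := le_trans (abs_nonneg _) (hβ ⟨0, hm⟩)
  set Bℝ := B.map (Int.cast : ℤ → ℝ) with hBℝ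
  -- Part 1
  have hsum_a : ∀ k, ∑ j, (r j : ℝ) * (a j k : ℝ) = 0 := by
    intro k
    have h0 : ∑ j, A k j * r j = 0 := congrFun hr k
    have : ∑ j, r j * a j k = 0 := by
      rw [← h0]
      exact Finset.sum_congr rfl fun j _ => by rw [hA, mul_comm]
    exact_mod_cast congrArg (Int.cast : ℤ → ℝ) this
  have h1 : (∑ j, (r j : ℝ) • z j) = 0 := by
    funext i
    have : (∑ j, (r j : ℝ) • z j) i = ∑ j, (r j : ℝ) * z j i := by simp
    rw [this]
    simp only [hz, Pi.smul_apply, smul_eq_mul, Matrix.mulVec, dotProduct]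
    have : ∑ j, (r j : ℝ) * ((Q : ℝ)⁻¹ * ∑ k, Bℝ i k * (a j k : ℝ))
        = ∑ k, (Q : ℝ)⁻¹ * Bℝ i k * ∑ j, (r j : ℝ) * (a j k : ℝ) := by
      simp_rw [Finset.mul_sum]
      rw [Finset.sum_comm]
      exact Finset.sum_congr rfl fun k _ => Finset.sum_congr rfl fun j _ => by ring
    rw [this]
    simp [hsum_a]
  refine ⟨h1, ?_, ?_⟩
  · -- Part 2
    choose t ht hyt using hy
    have hBinv : ∀ j, Bℝ⁻¹.mulVec (y j) = t j := by
      intro j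
      rw [hyt j, Matrix.mulVec_mulVec, Matrix.nonsing_inv_mul _ hBdet, Matrix.one_mulVec]
    have haj : ∀ j i, a j i = ⌊(Q : ℝ) * t j i⌋ := by
      intro j i; rw [ha, hBinv]
    set w : Fin m → Fin n → ℝ := fun j i => t j i - (a j i : ℝ) / Q with hw
    have hwb : ∀ j i, |w j i| ≤ 1 / Q := by
      intro j i
      have hfl := Int.floor_le ((Q : ℝ) * t j i)
      have hfl2 := Int.lt_floor_add_one ((Q : ℝ) * t j i)
      rw [← haj j i] at hfl hfl2
      have h3 : (a j i : ℝ) / Q ≤ t j i := by rw [div_le_iff₀ hQR]; nlinarith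
      have h4 : t j i ≤ ((a j i : ℝ) + 1) / Q := by rw [le_div_iff₀ hQR]; nlinarith
      have h5 : ((a j i : ℝ) + 1) / Q = (a j i : ℝ) / Q + 1 / Q := add_div _ _ _
      have h6 : (0:ℝ) < 1 / Q := by positivity
      simp only [hw]
      rw [abs_le]
      constructor <;> linarith
    have hyz : ∀ j, y j - z j = Bℝ.mulVec (w j) := by
      intro j
      rw [hyt j, hz j]
      have hwe : w j = t j - (Q : ℝ)⁻¹ • (fun i => (a j i : ℝ)) := by
        funext i
        simp [hw, div_eq_inv_mul, mul_comm]
      rw [hwe, Matrix.mulVec_sub, Matrix.mulVec_smul]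
    have hcomp : ∀ j i, |(Bℝ.mulVec (w j)) i| ≤ (n : ℝ) * M / Q := by
      intro j i
      have : |(Bℝ.mulVec (w j)) i| ≤ ∑ k, |Bℝ i k * w j k| := by
        simpa [Matrix.mulVec, dotProduct] using
          Finset.abs_sum_le_sum_abs (fun k => Bℝ i k * w j k) Finset.univ
      refine this.trans ?_
      have : ∑ k, |Bℝ i k * w j k| ≤ ∑ _k : Fin n, (M : ℝ) * (1 / Q) := by
        refine Finset.sum_le_sum fun k _ => ?_
        rw [abs_mul]
        refine mul_le_mul ?_ (hwb j k) (abs_nonneg _) (by positivity)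
        have := hB i k
        simp only [hBℝ, Matrix.map_apply]
        rw [← Int.cast_abs]
        exact_mod_cast this
      refine this.trans (le_of_eq ?_)
      simp
      ring
    have hnormj : ∀ j, euclNorm (y j - z j) ≤ Real.sqrt n * ((n : ℝ) * M / Q) := by
      intro j
      rw [hyz j]
      exact euclNorm_le_of_forall _ _ (by positivity) (hcomp j)
    have hdecomp : ∑ j, (r j : ℝ) • (y j - x j)
        = (∑ j, (r j : ℝ) • (y j - z j)) - ∑ j, (r j : ℝ) • x j := by
      have he : ∀ j : Fin m, (r j : ℝ) • (y j - x j)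
          = ((r j : ℝ) • (y j - z j) - (r j : ℝ) • x j) + (r j : ℝ) • z j := by
        intro j; rw [smul_sub, smul_sub]; abel
      rw [Finset.sum_congr rfl fun j _ => he j, Finset.sum_add_distrib,
        Finset.sum_sub_distrib, h1, add_zero]
    have hS : euclNorm (∑ j, (r j : ℝ) • (y j - z j))
        ≤ β * (m : ℝ) * ((n : ℝ) * Real.sqrt n) * (M : ℝ) / (Q : ℝ) := by
      rw [euclNorm_eq, toE_sum]
      calc ‖∑ j, toE ((r j : ℝ) • (y j - z j))‖
          ≤ ∑ j, ‖toE ((r j : ℝ) • (y j - z j))‖ := norm_sum_le _ _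
        _ = ∑ j, |(r j : ℝ)| * euclNorm (y j - z j) := by
            refine Finset.sum_congr rfl fun j _ => ?_
            rw [toE_smul, norm_smul, ← euclNorm_eq, Real.norm_eq_abs]
        _ ≤ ∑ _j : Fin m, β * (Real.sqrt n * ((n : ℝ) * M / Q)) :=
            Finset.sum_le_sum fun j _ =>
              mul_le_mul (hβ j) (hnormj j) (euclNorm_nonneg _) hβ0
        _ = β * (m : ℝ) * ((n : ℝ) * Real.sqrt n) * (M : ℝ) / (Q : ℝ) := by
            simp [Finset.sum_const, Finset.card_univ]
            ring
    rw [hdecomp]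
    calc euclNorm ((∑ j, (r j : ℝ) • (y j - z j)) - ∑ j, (r j : ℝ) • x j)
        ≤ euclNorm (∑ j, (r j : ℝ) • (y j - z j)) + euclNorm (∑ j, (r j : ℝ) • x j) := by
          rw [euclNorm_eq, euclNorm_eq, euclNorm_eq, toE_sub]
          exact norm_sub_le _ _
      _ ≤ euclNorm (∑ j, (r j : ℝ) • x j)
          + β * (m : ℝ) * ((n : ℝ) * Real.sqrt n) * (M : ℝ) / (Q : ℝ) := by
          rw [add_comm]
          exact add_le_add (le_refl _) hS
  · -- Part 3
    have key : (m : ℝ) * ((n : ℝ) * Real.sqrt n) * (M : ℝ) / (Q : ℝ)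
        ≤ Real.sqrt ((n : ℝ) * (m : ℝ)) := by
      rw [div_le_iff₀ hQR]
      have h2 : Real.sqrt ((n : ℝ) * (m : ℝ)) * ((n : ℝ) * Real.sqrt m * (M : ℝ))
          ≤ Real.sqrt ((n : ℝ) * (m : ℝ)) * (Q : ℝ) := by
        exact mul_le_mul_of_nonneg_left hQbig (Real.sqrt_nonneg _)
      refine le_trans (le_of_eq ?_) h2
      rw [Real.sqrt_mul (by positivity)]
      have hm2 : Real.sqrt m * Real.sqrt m = (m : ℝ) := Real.mul_self_sqrt (by positivity)
      linear_combination (-(n:ℝ) * (M:ℝ) * Real.sqrt n) * hm2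
    have : β * (m : ℝ) * ((n : ℝ) * Real.sqrt n) * (M : ℝ) / (Q : ℝ)
        ≤ β * Real.sqrt ((n : ℝ) * (m : ℝ)) := by
      have := mul_le_mul_of_nonneg_left key hβ0
      calc β * (m : ℝ) * ((n : ℝ) * Real.sqrt n) * (M : ℝ) / (Q : ℝ)
          = β * ((m : ℝ) * ((n : ℝ) * Real.sqrt n) * (M : ℝ) / (Q : ℝ)) := by ring
        _ ≤ β * Real.sqrt ((n : ℝ) * (m : ℝ)) := this
    linarith
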